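/- For every $x > m/2$ one has $k(x) > 0$ and the ratio identity $\dfrac{Dk(x)}{k(x)^2} = -\dfrac{1}{2} + \dfrac{x/m}{2\left(\frac{x}{m} - \frac{1}{2}\right)^2}$ holds. -/

import Mathlib

/-- Constant-mean-curvature slice of Schwarzschild–deSitter: for every
`x > m/2` one has `k x > 0` and
`Dk x / k(x)² = -1/2 + (x/m) / (2 (x/m - 1/2)²)`. -/
theorem cmc_slice_ratio_identity (m : ℝ) (hm : 0 < m)
    (ψ k Dk : ℝ → ℝ)
    (hψ : ∀ x, ψ x = 1 + m/(2*x))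
    (hk : ∀ x, k x = (2/x) * (1 - m/(2*x)) / (ψ x)^3)
    (hDk : ∀ x, Dk x = (ψ x)⁻¹^2 * deriv k x) :
    ∀ x : ℝ, m/2 < x →
      0 < k x ∧
      Dk x / (k x)^2 = -(1/2) + (x/m) / (2 * (x/m - 1/2)^2) := by
  intro x hx
  have hx0 : 0 < x := lt_trans (by positivity) hx
  have hxm : 0 < x + m/2 := by linarith
  have hxm' : 0 < x - m/2 := by linarith
  -- rational form of k near x
  set g : ℝ → ℝ := fun y => 2*(y - m/2)*y/((y + m/2)^3) with hg
  have hkg : ∀ y : ℝ, 0 < y → k y = g y := by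
    intro y hy
    have hy0 : y ≠ 0 := ne_of_gt hy
    rcases eq_or_ne (y + m/2) 0 with h | h
    · have hψy : ψ y = 0 := by
        rw [hψ]
        field_simp
        linarith
      simp [hk, hψy, hg, h]
    · rw [hk, hψ, hg]
      field_simp
    -- done
  have hkx : k x = g x := hkg x hx0
  have hkpos : 0 < k x := by
    rw [hkx, hg]
    positivity
  refine ⟨hkpos, ?_⟩
  -- derivative of g at x
  have hq : HasDerivAt (fun y : ℝ => (y + m/2)^3) (3*(x + m/2)^2 * 1) x := by
    exact (((hasDerivAt_id x).add_const (m/2)).pow 3)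
  have hp : HasDerivAt (fun y : ℝ => 2*(y - m/2)*y) (4*x - m) x := by
    have h1 : HasDerivAt (fun y : ℝ => 2*(y - m/2)) 2 x := by
      simpa using (((hasDerivAt_id x).sub_const (m/2)).const_mul 2)
    have := h1.mul (hasDerivAt_id x)
    refine this.congr_deriv ?_
    simp only [id]
    ring
  have hq0 : (x + m/2)^3 ≠ 0 := by positivity
  have hG : HasDerivAt g
      (((4*x - m) * (x + m/2)^3 - 2*(x - m/2)*x * (3*(x + m/2)^2 * 1)) / ((x + m/2)^3)^2) x :=
    hp.div hq hq0
  have hEq : k =ᶠ[nhds x] g := by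
    filter_upwards [IsOpen.mem_nhds isOpen_Ioi (show x ∈ Set.Ioi (0:ℝ) from hx0)] with y hy
    exact hkg y hy
  have hderiv : deriv k x =
      ((4*x - m) * (x + m/2)^3 - 2*(x - m/2)*x * (3*(x + m/2)^2 * 1)) / ((x + m/2)^3)^2 := by
    rw [Filter.EventuallyEq.deriv_eq hEq]
    exact hG.deriv
  have hψx : ψ x = (x + m/2)/x := by
    rw [hψ]; field_simp
  have hx0' : x ≠ 0 := ne_of_gt hx0
  have hxm0 : x + m/2 ≠ 0 := ne_of_gt hxm
  have hxm0' : x - m/2 ≠ 0 := ne_of_gt hxm'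
  have hm0 : m ≠ 0 := ne_of_gt hm
  have hd2 : deriv k x = (-2*x^2 + 4*m*x - m^2/2)/((x + m/2)^4) := by
    rw [hderiv, div_eq_div_iff (by positivity) (by positivity)]
    ring
  have hDkx : Dk x = x^2 * (-2*x^2 + 4*m*x - m^2/2)/((x + m/2)^6) := by
    rw [hDk, hψx, hd2]
    field_simp
  have hk2 : (k x)^2 = 4*(x - m/2)^2*x^2/((x + m/2)^6) := by
    rw [hkx, hg]
    field_simp
    ring
  have h2 : x/m - 1/2 = (x - m/2)/m := by
    field_simp
  have hdL : (2:ℝ)*(x/m - 1/2)^2 ≠ 0 := by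
    rw [h2]; positivity
  have hdR : (2:ℝ)*(x - m/2)^2 ≠ 0 := by positivity
  have h3 : x/m/(2*(x/m - 1/2)^2) = x*m/(2*(x - m/2)^2) := by
    rw [div_eq_div_iff hdL hdR, h2]
    field_simp
  have hRHS : -(1/2 : ℝ) + x/m/(2*(x/m - 1/2)^2)
      = (-2*x^2 + 4*m*x - m^2/2)/(4*(x - m/2)^2) := by
    have hneg : -(1/2:ℝ) = (-1)/2 := by norm_num
    rw [hneg, h3, div_add_div _ _ two_ne_zero hdR,
      div_eq_div_iff (by positivity) (by positivity)]
    ring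
  rw [hDkx, hk2, hRHS, div_eq_div_iff (by positivity) (by positivity)]
  field_simp
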